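/- arXiv:2505.05788 — 4 statements merged into one kernel-verified Lean document; each statement's English description precedes it below -/
import Mathlib

section
/- Let E = {ξ₁, ..., ξ_N} be a finite set of points on the unit circle in ℂ, and let (a_m) be the sequence of complex numbers defined by the power series expansion 1/∏_{j=1}^N (1 - conj(ξ_j) z) = ∑_{m=0}^∞ a_m z^m (valid for |z| < 1). Then the sequence (a_m) is bounded. -/
open Polynomial Finset Filter

/-- Uniqueness of power series coefficients: if `∑ c m z^m = 0` on the unit disc, `c = 0`. -/
lemma aux_coeff_eq_zero (c : ℕ → ℂ)
    (hc : ∀ z : ℂ, ‖z‖ < 1 → HasSum (fun m => c m * z ^ m) 0) : ∀ m, c m = 0 := by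
  have hball : HasFPowerSeriesOnBall (0 : ℂ → ℂ)
      (FormalMultilinearSeries.ofScalars ℂ c) 0 1 := by
    refine ⟨?_, one_pos, fun {y} hy => ?_⟩
    · refine ENNReal.le_of_forall_nnreal_lt (fun r hr => ?_)
      have hr1 : (r : ℝ) < 1 := by exact_mod_cast hr
      have hs := (hc (r : ℂ) (by simpa using hr1)).summable
      have ht : Tendsto (fun n => ‖c n * (r : ℂ) ^ n‖) atTop (nhds 0) :=
        tendsto_zero_iff_norm_tendsto_zero.mp hs.tendsto_atTop_zero
      refine FormalMultilinearSeries.le_radius_of_tendsto _ (l := 0) ?_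
      have hcoeff : ∀ n, (FormalMultilinearSeries.ofScalars ℂ c).coeff n = c n := by
        intro n
        simp only [FormalMultilinearSeries.coeff, FormalMultilinearSeries.ofScalars,
          ContinuousMultilinearMap.smul_apply, ContinuousMultilinearMap.mkPiAlgebraFin_apply,
          smul_eq_mul]
        rw [show (1 : Fin n → ℂ) = fun _ => (1 : ℂ) from rfl, List.ofFn_const,
          List.prod_replicate, one_pow, mul_one]
      convert ht using 2 with n
      simp [FormalMultilinearSeries.ofScalars_norm, hcoeff n]
    · have hy' : ‖y‖ < 1 := by
        have hy2 : ‖y‖ₑ < 1 := by simpa using hy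
        rw [← ofReal_norm] at hy2
        exact (ENNReal.ofReal_lt_one).mp hy2
      have := hc y hy'
      simpa [FormalMultilinearSeries.coeff, FormalMultilinearSeries.ofScalars,
        smul_eq_mul, mul_comm] using this
  have h0 := hball.hasFPowerSeriesAt.eq_zero
  intro m
  exact congrFun ((FormalMultilinearSeries.ofScalars_series_eq_zero ℂ).mp h0) m

/-- The Taylor coefficients of `z ↦ 1/∏_{j}(1 - conj(ξ j) z)`
(for ξ j distinct points on the unit circle) form a bounded sequence. -/
theorem stmt_0 {N : ℕ} (hN : 0 < N) (ξ : Fin N → ℂ) (hξ : ∀ j, ‖ξ j‖ = 1)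
    (hinj : Function.Injective ξ) (a : ℕ → ℂ)
    (ha : ∀ z : ℂ, ‖z‖ < 1 →
      HasSum (fun m => a m * z ^ m) (∏ j, (1 - (starRingEnd ℂ) (ξ j) * z))⁻¹) :
    ∃ C : ℝ, ∀ m, ‖a m‖ ≤ C := by
  classical
  set w : Fin N → ℂ := fun j => (starRingEnd ℂ) (ξ j) with hw
  have hwnorm : ∀ j, ‖w j‖ = 1 := fun j => by simp [hw, hξ j]
  have hwx : ∀ j, w j * ξ j = 1 := by
    intro j
    have h1 := RCLike.conj_mul (ξ j)
    rw [hξ j] at h1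
    simpa [hw] using h1
  have hne : ∀ j k, k ≠ j → 1 - w k * ξ j ≠ 0 := by
    intro j k hkj h
    apply hkj
    apply hinj
    have h1 : w k * ξ j = 1 := by linear_combination -h
    calc ξ k = ξ k * (w k * ξ j) := by rw [h1, mul_one]
      _ = (w k * ξ k) * ξ j := by ring
      _ = ξ j := by rw [hwx k, one_mul]
  set A : Fin N → ℂ := fun j => (∏ k ∈ univ.erase j, (1 - w k * ξ j))⁻¹ with hA
  set b : ℕ → ℂ := fun m => ∑ j, A j * (w j) ^ m with hb
  have hprodne : ∀ j, ∏ k ∈ univ.erase j, (1 - w k * ξ j) ≠ 0 := fun j =>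
    Finset.prod_ne_zero_iff.mpr fun k hk => hne j k (Finset.ne_of_mem_erase hk)
  -- the partial fraction (Lagrange interpolation) identity
  have key : ∀ z : ℂ, ∑ j, A j * ∏ k ∈ univ.erase j, (1 - w k * z) = 1 := by
    have hQz : (∑ j, Polynomial.C (A j) *
        ∏ k ∈ univ.erase j, (1 - Polynomial.C (w k) * Polynomial.X)) - 1 = 0 := by
      apply Polynomial.eq_zero_of_natDegree_lt_card_of_eval_eq_zero _ hinj
      · intro l
        simp only [eval_sub, eval_one, eval_finset_sum, eval_mul, eval_C, eval_prod, eval_X]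
        rw [sub_eq_zero, Finset.sum_eq_single l]
        · exact inv_mul_cancel₀ (hprodne l)
        · intro j _ hjl
          apply mul_eq_zero_of_right
          apply Finset.prod_eq_zero (Finset.mem_erase.mpr ⟨hjl.symm, Finset.mem_univ l⟩)
          rw [hwx l, sub_self]
        · simp
      · have h1 : ∀ j : Fin N, (Polynomial.C (A j) *
            ∏ k ∈ univ.erase j, (1 - Polynomial.C (w k) * Polynomial.X)).natDegree ≤ N - 1 := by
          intro j
          refine (Polynomial.natDegree_C_mul_le _ _).trans ?_
          refine (Polynomial.natDegree_prod_le _ _).trans ?_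
          calc ∑ k ∈ univ.erase j, (1 - Polynomial.C (w k) * Polynomial.X).natDegree
              ≤ ∑ _k ∈ univ.erase j, 1 := by
                refine Finset.sum_le_sum fun k _ => ?_
                refine (Polynomial.natDegree_sub_le _ _).trans ?_
                simp only [Polynomial.natDegree_one, max_le_iff]
                exact ⟨Nat.zero_le _, (Polynomial.natDegree_C_mul_le _ _).trans
                  (by simp [Polynomial.natDegree_X])⟩
            _ = N - 1 := by simp [Finset.card_erase_of_mem]
        have hS : (∑ j, Polynomial.C (A j) *
            ∏ k ∈ univ.erase j, (1 - Polynomial.C (w k) * Polynomial.X)).natDegree ≤ N - 1 :=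
          Polynomial.natDegree_sum_le_of_forall_le _ _ fun j _ => h1 j
        have h2 : ((∑ j, Polynomial.C (A j) *
            ∏ k ∈ univ.erase j, (1 - Polynomial.C (w k) * Polynomial.X)) - 1).natDegree
            ≤ N - 1 := by
          refine (Polynomial.natDegree_sub_le _ _).trans ?_
          simp [hS, Polynomial.natDegree_one]
        rw [Fintype.card_fin]
        omega
    intro z
    have := congrArg (Polynomial.eval z) hQz
    simp only [eval_sub, eval_one, eval_finset_sum, eval_mul, eval_C, eval_prod, eval_X,
      eval_zero, sub_eq_zero] at this
    exact this
  have hfne : ∀ z : ℂ, ‖z‖ < 1 → ∀ j, (1 - w j * z) ≠ 0 := by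
    intro z hz j h
    have h1 : (1 : ℂ) = w j * z := by linear_combination h
    have := congrArg norm h1
    rw [norm_mul, hwnorm j, one_mul, norm_one] at this
    exact absurd this.symm (ne_of_lt hz)
  have hprodz : ∀ z : ℂ, ‖z‖ < 1 → ∏ j, (1 - w j * z) ≠ 0 := fun z hz =>
    Finset.prod_ne_zero_iff.mpr fun j _ => hfne z hz j
  have hsum_eq : ∀ z : ℂ, ‖z‖ < 1 →
      ∑ j, A j * (1 - w j * z)⁻¹ = (∏ j, (1 - w j * z))⁻¹ := by
    intro z hz
    have hmain : (∑ j, A j * (1 - w j * z)⁻¹) * ∏ j, (1 - w j * z)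
        = ∑ j, A j * ∏ k ∈ univ.erase j, (1 - w k * z) := by
      rw [Finset.sum_mul]
      refine Finset.sum_congr rfl fun j _ => ?_
      rw [mul_assoc, ← Finset.mul_prod_erase univ _ (Finset.mem_univ j),
        inv_mul_cancel_left₀ (hfne z hz j)]
    exact eq_inv_of_mul_eq_one_left (hmain.trans (key z))
  have hbsum : ∀ z : ℂ, ‖z‖ < 1 → HasSum (fun m => b m * z ^ m) (∏ j, (1 - w j * z))⁻¹ := by
    intro z hz
    have h1 : ∀ j : Fin N, HasSum (fun m => A j * (w j * z) ^ m) (A j * (1 - w j * z)⁻¹) := by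
      intro j
      refine HasSum.mul_left (A j) (hasSum_geometric_of_norm_lt_one (ξ := w j * z) ?_)
      rw [norm_mul, hwnorm j, one_mul]; exact hz
    have h2 := hasSum_sum (fun j (_ : j ∈ univ) => h1 j)
    rw [hsum_eq z hz] at h2
    convert h2 using 1
    funext m
    simp only [hb, Finset.sum_mul, mul_pow]
    exact Finset.sum_congr rfl fun j _ => by ring
  have hab : ∀ m, a m = b m := by
    have h0 : ∀ z : ℂ, ‖z‖ < 1 → HasSum (fun m => (a m - b m) * z ^ m) 0 := by
      intro z hz
      have := (ha z hz).sub (hbsum z hz)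
      rw [sub_self] at this
      simpa only [sub_mul] using this
    intro m
    exact sub_eq_zero.mp (aux_coeff_eq_zero _ h0 m)
  refine ⟨∑ j, ‖A j‖, fun m => ?_⟩
  rw [hab m]
  calc ‖∑ j, A j * w j ^ m‖ ≤ ∑ j, ‖A j * w j ^ m‖ := norm_sum_le _ _
    _ = ∑ j, ‖A j‖ := by simp [norm_mul, norm_pow, hwnorm]
end

section
/- Let X be a reflexive Banach space and T : X → X a bounded linear operator that is power bounded (i.e., sup_{n≥0} ‖Tⁿ‖ < ∞). Then X decomposes as the direct sum X = Ker(I - T) ⊕ closure(Ran(I - T)). -/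
open Filter Topology Metric Finset NormedSpace

section MeanErgodicAux

variable {X : Type*} [NormedAddCommGroup X] [NormedSpace ℂ X]

/-- Separation: a point outside a closed `ℂ`-subspace is separated from it by a
continuous `ℂ`-linear functional vanishing on the subspace. -/
lemma aux_sep (M : Submodule ℂ X) (hM : IsClosed (M : Set X)) {v : X} (hv : v ∉ M) :
    ∃ f : X →L[ℂ] ℂ, (∀ m ∈ M, f m = 0) ∧ f v ≠ 0 := by
  obtain ⟨f, u, hfv, hfM⟩ :=
    geometric_hahn_banach_point_closed (M.restrictScalars ℝ).convex hM hv
  have hf0 : ∀ m ∈ M, f m = 0 := by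
    intro m hm
    by_contra h
    have h2 := hfM (((u - 1 : ℝ) / f m) • m) ((M.restrictScalars ℝ).smul_mem _ hm)
    rw [map_smul, smul_eq_mul, div_mul_cancel₀ _ h] at h2
    linarith
  have hu0 : u < 0 := by simpa [hf0 0 M.zero_mem] using hfM 0 M.zero_mem
  refine ⟨(StrongDual.extendRCLike (𝕜 := ℂ) f), fun m hm => ?_, ?_⟩
  · rw [StrongDual.extendRCLike_apply, hf0 m hm,
      hf0 _ (M.smul_mem _ hm)]
    simp
  · have hre : Complex.re ((StrongDual.extendRCLike (𝕜 := ℂ) f) v) = f v := by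
      rw [StrongDual.extendRCLike_apply]
      simp
    intro h
    rw [h] at hre
    simp only [Complex.zero_re] at hre
    have : f v < 0 := hfv.trans hu0
    linarith [hre]

/-- The ergodic averages `(1/n) ∑_{k<n} T^k`. -/
noncomputable def birk (T : X →L[ℂ] X) (n : ℕ) : X →L[ℂ] X :=
  (n : ℂ)⁻¹ • ∑ k ∈ range n, T ^ k

lemma birk_apply (T : X →L[ℂ] X) (n : ℕ) (x : X) :
    birk T n x = (n : ℂ)⁻¹ • ∑ k ∈ range n, (T ^ k) x := by
  simp [birk, ContinuousLinearMap.sum_apply]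

lemma pow_apply_fixed {T : X →L[ℂ] X} {z : X} (hz : T z = z) (k : ℕ) : (T ^ k) z = z := by
  induction k with
  | zero => simp
  | succ k ih => rw [pow_succ, ContinuousLinearMap.mul_apply, hz, ih]

lemma birk_fixed {T : X →L[ℂ] X} {z : X} (hz : T z = z) {n : ℕ} (hn : n ≠ 0) :
    birk T n z = z := by
  rw [birk_apply]
  simp only [pow_apply_fixed hz, Finset.sum_const, card_range]
  rw [← Nat.cast_smul_eq_nsmul ℂ, smul_smul,
    inv_mul_cancel₀ (by exact_mod_cast hn), one_smul]

lemma birk_norm_le {T : X →L[ℂ] X} {C : ℝ} (hT : ∀ n : ℕ, ‖T ^ n‖ ≤ C) (n : ℕ) (x : X) :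
    ‖birk T n x‖ ≤ C * ‖x‖ := by
  have hC0 : 0 ≤ C := (norm_nonneg _).trans (hT 0)
  rcases Nat.eq_zero_or_pos n with hn | hn
  · subst hn
    simp only [birk_apply, range_zero, Finset.sum_empty, smul_zero, norm_zero]
    positivity
  · rw [birk_apply, norm_smul]
    have h1 : ‖((n : ℂ))⁻¹‖ = (n : ℝ)⁻¹ := by
      rw [norm_inv, Complex.norm_natCast]
    rw [h1]
    calc (n : ℝ)⁻¹ * ‖∑ k ∈ range n, (T ^ k) x‖
        ≤ (n : ℝ)⁻¹ * ∑ k ∈ range n, ‖(T ^ k) x‖ := by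
          gcongr
          exact norm_sum_le _ _
      _ ≤ (n : ℝ)⁻¹ * ∑ _k ∈ range n, C * ‖x‖ := by
          gcongr with k hk
          exact ((T ^ k).le_opNorm x).trans (by gcongr; exact hT k)
      _ = (n : ℝ)⁻¹ * ((n : ℝ) * (C * ‖x‖)) := by
          rw [Finset.sum_const, card_range, nsmul_eq_mul]
      _ = C * ‖x‖ := by
          rw [← mul_assoc, inv_mul_cancel₀ (by positivity), one_mul]

lemma birk_mul_one_sub (T : X →L[ℂ] X) (n : ℕ) :
    (∑ k ∈ range n, T ^ k) * (1 - T) = 1 - T ^ n := by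
  have h := geom_sum_mul T n
  have h2 : (∑ k ∈ range n, T ^ k) * (1 - T) = -((∑ k ∈ range n, T ^ k) * (T - 1)) := by
    rw [mul_sub, mul_sub, mul_one, neg_sub]
  rw [h2, h, neg_sub]

lemma one_sub_mul_birk (T : X →L[ℂ] X) (n : ℕ) :
    (1 - T) * (∑ k ∈ range n, T ^ k) = 1 - T ^ n := by
  have h := mul_geom_sum T n
  have h2 : (1 - T) * (∑ k ∈ range n, T ^ k) = -((T - 1) * ∑ k ∈ range n, T ^ k) := by
    rw [sub_mul, sub_mul, one_mul, neg_sub]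
  rw [h2, h, neg_sub]

lemma birk_apply' (T : X →L[ℂ] X) (n : ℕ) (x : X) :
    birk T n x = (n : ℂ)⁻¹ • (∑ k ∈ range n, T ^ k) x := rfl

/-- Key existence: every point decomposes (fixed part + closure-of-range part). -/
lemma mean_ergodic_exists
    (hrefl : Function.Surjective (NormedSpace.inclusionInDoubleDual ℂ X))
    (T : X →L[ℂ] X) (C : ℝ) (hT : ∀ n : ℕ, ‖T ^ n‖ ≤ C) (x : X) :
    ∃ y : X, T y = y ∧ x - y ∈ (LinearMap.range ((1 - T : X →L[ℂ] X) : X →ₗ[ℂ] X)).topologicalClosure := by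
  classical
  set J := NormedSpace.inclusionInDoubleDual ℂ X with hJ
  set g : ℕ → WeakDual ℂ (StrongDual ℂ X) :=
    fun n => StrongDual.toWeakDual (J (birk T n x)) with hg
  have hgK : ∀ n, g n ∈ WeakDual.toStrongDual ⁻¹' closedBall 0 (C * ‖x‖) := by
    intro n
    simp only [Set.mem_preimage, mem_closedBall_zero_iff]
    exact (mem_closedBall_zero_iff (E := StrongDual ℂ (StrongDual ℂ X))).mpr ((NormedSpace.double_dual_bound ℂ X _).trans (birk_norm_le hT n x))
  have hcpt := WeakDual.isCompact_closedBall (𝕜 := ℂ) (E := StrongDual ℂ X) 0 (C * ‖x‖)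
  set U : Ultrafilter ℕ := Ultrafilter.of atTop with hUdef
  have hU : (U : Filter ℕ) ≤ atTop := Ultrafilter.of_le _
  obtain ⟨Φ, _, hlim⟩ := hcpt.ultrafilter_le_nhds (U.map g) (by
    rw [Ultrafilter.coe_map, Filter.le_principal_iff, Filter.mem_map]
    exact Filter.univ_mem' fun n => hgK n)
  rw [Ultrafilter.coe_map] at hlim
  have hlim' : Tendsto g (U : Filter ℕ) (𝓝 Φ) := hlim
  obtain ⟨y, hy⟩ := hrefl (WeakDual.toStrongDual Φ)
  have hconv : ∀ f : StrongDual ℂ X,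
      Tendsto (fun n => f (birk T n x)) (U : Filter ℕ) (𝓝 (f y)) := by
    intro f
    have hc := (WeakDual.eval_continuous (𝕜 := ℂ) (E := StrongDual ℂ X) f).tendsto Φ
    have h2 := hc.comp hlim'
    have he1 : (fun n => (g n) f) = fun n => f (birk T n x) := by
      funext n
      simp only [hg]
      exact NormedSpace.dual_def ℂ X (birk T n x) f
    have he2 : Φ f = f y := by
      have : WeakDual.toStrongDual Φ f = f y := by
        rw [← hy]; exact NormedSpace.dual_def ℂ X y f
      exact this.symm ▸ rfl
    rw [← he1, ← he2]
    exact h2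
  -- the deviation from invariance tends to zero
  have hC0 : 0 ≤ C := (norm_nonneg _).trans (hT 0)
  have hdiff : ∀ n : ℕ, T (birk T n x) - birk T n x = (n : ℂ)⁻¹ • ((T ^ n) x - x) := by
    intro n
    have hop : T * (∑ k ∈ range n, T ^ k) - (∑ k ∈ range n, T ^ k) = T ^ n - 1 := by
      have := one_sub_mul_birk T n
      have h2 : T * (∑ k ∈ range n, T ^ k) - (∑ k ∈ range n, T ^ k)
          = -((1 - T) * (∑ k ∈ range n, T ^ k)) := by
        rw [sub_mul, one_mul, neg_sub]
      rw [h2, this, neg_sub]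
    have := congrArg (fun (S : X →L[ℂ] X) => S x) hop
    simp only [ContinuousLinearMap.sub_apply, ContinuousLinearMap.mul_apply,
      ContinuousLinearMap.one_apply] at this
    calc T (birk T n x) - birk T n x
        = (n : ℂ)⁻¹ • (T ((∑ k ∈ range n, T ^ k) x) - (∑ k ∈ range n, T ^ k) x) := by
          rw [birk_apply', map_smul, smul_sub]
      _ = (n : ℂ)⁻¹ • ((T ^ n) x - x) := by rw [this]
  have hzero : Tendsto (fun n : ℕ => ‖T (birk T n x) - birk T n x‖) atTop (𝓝 0) := by
    have hb : ∀ n : ℕ, ‖T (birk T n x) - birk T n x‖ ≤ (n : ℝ)⁻¹ * ((C + 1) * ‖x‖) := by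
      intro n
      rw [hdiff n, norm_smul, norm_inv, Complex.norm_natCast]
      gcongr
      calc ‖(T ^ n) x - x‖ ≤ ‖(T ^ n) x‖ + ‖x‖ := norm_sub_le _ _
        _ ≤ C * ‖x‖ + 1 * ‖x‖ := by
            gcongr
            · exact ((T ^ n).le_opNorm x).trans (by gcongr; exact hT n)
            · rw [one_mul]
        _ = (C + 1) * ‖x‖ := by ring
    have hlim0 : Tendsto (fun n : ℕ => (n : ℝ)⁻¹ * ((C + 1) * ‖x‖)) atTop (𝓝 0) := by
      simpa using tendsto_inv_atTop_nhds_zero_nat.mul_const ((C + 1) * ‖x‖)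
    exact squeeze_zero (fun n => norm_nonneg _) hb hlim0
  refine ⟨y, ?_, ?_⟩
  · -- T y = y
    rw [NormedSpace.eq_iff_forall_dual_eq ℂ]
    intro f
    have h1 : Tendsto (fun n => f (T (birk T n x))) (U : Filter ℕ) (𝓝 (f (T y))) :=
      hconv (f.comp T)
    have h2 : Tendsto (fun n => f (T (birk T n x))) (U : Filter ℕ) (𝓝 (f y)) := by
      have hsplit : ∀ n, f (T (birk T n x))
          = f (birk T n x) + f (T (birk T n x) - birk T n x) := by
        intro n; rw [map_sub]; ring
      have hz2 : Tendsto (fun n => f (T (birk T n x) - birk T n x)) (U : Filter ℕ) (𝓝 0) := by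
        have hb : Tendsto (fun n => f (T (birk T n x) - birk T n x)) atTop (𝓝 0) := by
          rw [tendsto_zero_iff_norm_tendsto_zero]
          refine squeeze_zero (fun n => norm_nonneg _) (fun n => f.le_opNorm _) ?_
          simpa using hzero.const_mul ‖f‖
        exact hb.mono_left hU
      have := (hconv f).add hz2
      rw [add_zero] at this
      simpa only [← hsplit] using this
    exact tendsto_nhds_unique h1 h2
  · -- x - y ∈ closure of range
    by_contra hmem
    obtain ⟨f, hf0, hfne⟩ := aux_sep _ (Submodule.isClosed_topologicalClosure _) hmem
    have hfr : ∀ w ∈ LinearMap.range ((1 - T : X →L[ℂ] X) : X →ₗ[ℂ] X), f w = 0 := fun w hw =>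
      hf0 w (Submodule.le_topologicalClosure _ hw)
    -- x - birk T n x ∈ range (1 - T) for n ≥ 1
    have hmemr : ∀ n : ℕ, n ≠ 0 → x - birk T n x ∈ LinearMap.range ((1 - T : X →L[ℂ] X) : X →ₗ[ℂ] X) := by
      intro n hn
      refine ⟨(n : ℂ)⁻¹ • ∑ k ∈ range n, (∑ j ∈ range k, T ^ j) x, ?_⟩
      rw [map_smul, map_sum]
      have hterm : ∀ k, (1 - T) ((∑ j ∈ range k, T ^ j) x) = x - (T ^ k) x := by
        intro k
        have := congrArg (fun (S : X →L[ℂ] X) => S x) (one_sub_mul_birk T k)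
        simpa only [ContinuousLinearMap.mul_apply, ContinuousLinearMap.sub_apply,
          ContinuousLinearMap.one_apply] using this
      simp only [ContinuousLinearMap.coe_coe, hterm]
      rw [Finset.sum_sub_distrib, Finset.sum_const, card_range, smul_sub,
        ← Nat.cast_smul_eq_nsmul ℂ (n := n), smul_smul,
        inv_mul_cancel₀ (by exact_mod_cast hn : (n : ℂ) ≠ 0), one_smul, birk_apply]
    have hfx : ∀ n : ℕ, n ≠ 0 → f x - f (birk T n x) = 0 := by
      intro n hn
      rw [← map_sub]
      exact hfr _ (hmemr n hn)
    have h1 : Tendsto (fun n => f x - f (birk T n x)) (U : Filter ℕ) (𝓝 (f x - f y)) :=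
      tendsto_const_nhds.sub (hconv f)
    have h2 : Tendsto (fun n => f x - f (birk T n x)) (U : Filter ℕ) (𝓝 0) := by
      have hev : ∀ᶠ n in (U : Filter ℕ), f x - f (birk T n x) = 0 := by
        filter_upwards [hU (Filter.eventually_atTop.mpr ⟨1, fun n hn => Nat.one_le_iff_ne_zero.mp hn⟩)]
          with n hn
        exact hfx n hn
      exact Tendsto.congr' (hev.mono fun n hn => hn.symm) tendsto_const_nhds
    have : f x - f y = 0 := tendsto_nhds_unique h1 h2
    rw [← map_sub] at this
    exact hfne this

end MeanErgodicAux

/-- Mean ergodic decomposition: if `X` is a reflexive Banach space and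
`T` is power bounded, then `X = Ker(I - T) ⊕ closure(Ran(I - T))`. -/
theorem stmt_1 {X : Type*} [NormedAddCommGroup X] [NormedSpace ℂ X] [CompleteSpace X]
    (hrefl : Function.Surjective (NormedSpace.inclusionInDoubleDual ℂ X))
    (T : X →L[ℂ] X) (C : ℝ) (hT : ∀ n : ℕ, ‖T ^ n‖ ≤ C) :
    IsCompl (LinearMap.ker ((1 - T : X →L[ℂ] X) : X →ₗ[ℂ] X)) ((LinearMap.range ((1 - T : X →L[ℂ] X) : X →ₗ[ℂ] X)).topologicalClosure) := by
  have hC0 : 0 ≤ C := (norm_nonneg _).trans (hT 0)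
  constructor
  · -- disjoint
    rw [Submodule.disjoint_def]
    intro z hzker hzcl
    have hTz : T z = z := by
      have : (1 - T) z = 0 := hzker
      have h2 : z - T z = 0 := by
        simpa [ContinuousLinearMap.sub_apply] using this
      linear_combination (norm := module) -h2
    -- show ‖z‖ ≤ ε for all ε > 0
    have hkey : ∀ ε : ℝ, 0 < ε → ‖z‖ ≤ 0 + ε := by
      intro ε hε
      have hzc : z ∈ closure ((LinearMap.range ((1 - T : X →L[ℂ] X) : X →ₗ[ℂ] X)) : Set X) := hzcl
      have hε' : 0 < ε / (2 * (C + 1)) := by positivity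
      obtain ⟨w, hw, hdist⟩ := Metric.mem_closure_iff.mp hzc _ hε'
      obtain ⟨u, hu⟩ := hw
      -- birk T n w = n⁻¹ • (u - T^n u)
      have hbw : ∀ n : ℕ, birk T n w = (n : ℂ)⁻¹ • (u - (T ^ n) u) := by
        intro n
        have h0 := congrArg (fun (S : X →L[ℂ] X) => S u) (birk_mul_one_sub T n)
        simp only [ContinuousLinearMap.mul_apply] at h0
        rw [birk_apply', ← hu, ContinuousLinearMap.coe_coe, h0]
        simp [ContinuousLinearMap.sub_apply]
      have hbwn : ∀ n : ℕ, ‖birk T n w‖ ≤ (n : ℝ)⁻¹ * ((1 + C) * ‖u‖) := by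
        intro n
        rw [hbw n, norm_smul, norm_inv, Complex.norm_natCast]
        gcongr
        calc ‖u - (T ^ n) u‖ ≤ ‖u‖ + ‖(T ^ n) u‖ := norm_sub_le _ _
          _ ≤ 1 * ‖u‖ + C * ‖u‖ := by
              gcongr
              · rw [one_mul]
              · exact ((T ^ n).le_opNorm u).trans (by gcongr; exact hT n)
          _ = (1 + C) * ‖u‖ := by ring
      -- choose n large
      obtain ⟨n, hn1, hn2⟩ : ∃ n : ℕ, n ≠ 0 ∧ (n : ℝ)⁻¹ * ((1 + C) * ‖u‖) < ε / 2 := by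
        have : Tendsto (fun n : ℕ => (n : ℝ)⁻¹ * ((1 + C) * ‖u‖)) atTop (𝓝 0) := by
          simpa using tendsto_inv_atTop_nhds_zero_nat.mul_const ((1 + C) * ‖u‖)
        have hev := this.eventually (eventually_lt_nhds (show (0:ℝ) < ε / 2 by positivity))
        obtain ⟨n, hn⟩ := (hev.and (Filter.eventually_atTop.mpr ⟨1, fun m hm => hm⟩)).exists
        exact ⟨n, Nat.one_le_iff_ne_zero.mp hn.2, hn.1⟩
      have hz_eq : z = birk T n z := (birk_fixed hTz hn1).symm
      have hsplit : birk T n z = birk T n (z - w) + birk T n w := by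
        rw [← map_add]
        congr 1
        abel
      have hb1 : ‖birk T n (z - w)‖ ≤ C * ‖z - w‖ := birk_norm_le hT n (z - w)
      have hzw : ‖z - w‖ ≤ ε / (2 * (C + 1)) := by
        rw [← dist_eq_norm]
        exact hdist.le
      calc ‖z‖ = ‖birk T n (z - w) + birk T n w‖ := by rw [← hsplit, ← hz_eq]
        _ ≤ ‖birk T n (z - w)‖ + ‖birk T n w‖ := norm_add_le _ _
        _ ≤ C * (ε / (2 * (C + 1))) + ε / 2 := by
            gcongr
            · exact hb1.trans (by gcongr)
            · exact (hbwn n).trans hn2.le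
        _ ≤ ε / 2 + ε / 2 := by
            have hkey2 : C * (ε / (2 * (C + 1))) ≤ ε / 2 := by
              rw [mul_div_assoc'] at *
              rw [div_le_div_iff₀ (by positivity) (by norm_num)]
              nlinarith
            exact add_le_add hkey2 le_rfl
        _ = 0 + ε := by ring
    have : ‖z‖ ≤ 0 := le_of_forall_pos_le_add hkey
    exact norm_le_zero_iff.mp this
  · -- codisjoint
    rw [codisjoint_iff, eq_top_iff]
    intro x _
    obtain ⟨y, hy1, hy2⟩ := mean_ergodic_exists hrefl T C hT x
    have hyker : y ∈ LinearMap.ker ((1 - T : X →L[ℂ] X) : X →ₗ[ℂ] X) := by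
      simp only [LinearMap.mem_ker]
      have : (1 - T) y = y - T y := by
        simp [ContinuousLinearMap.sub_apply]
      rw [ContinuousLinearMap.coe_coe, this, hy1, sub_self]
    exact Submodule.mem_sup.mpr ⟨y, hyker, x - y, hy2, by abel⟩
end

section
/- Let (ε_k)_{k≥1} be an i.i.d. Rademacher sequence (symmetric ±1 valued random variables) on a probability space, X a Banach space, x₁, ..., x_N ∈ X, a₁, ..., a_N ∈ ℝ, and 1 ≤ p < ∞. Then E‖∑_{n=1}^N a_n ε_n x_n‖^p ≤ (max_{1≤n≤N} |a_n|)^p · E‖∑_{n=1}^N ε_n x_n‖^p. -/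
open MeasureTheory ProbabilityTheory Set
open scoped Classical

lemma rad_split {Ω : Type*} [MeasurableSpace Ω] (μ : Measure Ω) [IsProbabilityMeasure μ]
    {f : Ω → ℝ} (hf : Measurable f)
    (h1 : μ {ω | f ω = 1} = 1/2) (h2 : μ {ω | f ω = -1} = 1/2)
    (s : Set ℝ) :
    μ (f ⁻¹' s) = (if (1:ℝ) ∈ s then 1/2 else 0) + (if (-1:ℝ) ∈ s then 1/2 else 0) := by
  have hA : MeasurableSet {ω | f ω = 1} := hf (measurableSet_singleton 1)
  have hB : MeasurableSet {ω | f ω = -1} := hf (measurableSet_singleton (-1))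
  have hdisj : Disjoint {ω | f ω = 1} {ω | f ω = -1} := by
    rw [Set.disjoint_left]
    intro ω hω1 hω2
    simp only [mem_setOf_eq] at hω1 hω2
    rw [hω1] at hω2; norm_num at hω2
  have hU : μ ({ω | f ω = 1} ∪ {ω | f ω = -1}) = 1 := by
    rw [measure_union hdisj hB, h1, h2, one_div, ENNReal.inv_two_add_inv_two]
  have hcompl : μ ({ω | f ω = 1} ∪ {ω | f ω = -1})ᶜ = 0 := by
    rw [measure_compl (hA.union hB) (measure_ne_top _ _), hU, measure_univ, tsub_self]
  have hmain : μ (f ⁻¹' s) = μ (f ⁻¹' s ∩ ({ω | f ω = 1} ∪ {ω | f ω = -1})) :=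
    (measure_inter_conull hcompl).symm
  have e1 : f ⁻¹' s ∩ {ω | f ω = 1} = if (1:ℝ) ∈ s then {ω | f ω = 1} else ∅ := by
    split_ifs with h
    · ext ω
      simp only [mem_inter_iff, mem_preimage, mem_setOf_eq]
      exact ⟨fun h' => h'.2, fun h' => ⟨h' ▸ h, h'⟩⟩
    · ext ω
      simp only [mem_inter_iff, mem_preimage, mem_setOf_eq, mem_empty_iff_false, iff_false,
        not_and]
      intro hs' h1'
      exact h (h1' ▸ hs')
  have e2 : f ⁻¹' s ∩ {ω | f ω = -1} = if (-1:ℝ) ∈ s then {ω | f ω = -1} else ∅ := by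
    split_ifs with h
    · ext ω
      simp only [mem_inter_iff, mem_preimage, mem_setOf_eq]
      exact ⟨fun h' => h'.2, fun h' => ⟨h' ▸ h, h'⟩⟩
    · ext ω
      simp only [mem_inter_iff, mem_preimage, mem_setOf_eq, mem_empty_iff_false, iff_false,
        not_and]
      intro hs' h1'
      exact h (h1' ▸ hs')
  rw [hmain, Set.inter_union_distrib_left, e1, e2]
  split_ifs with hs1 hs2
  · rw [hU, one_div, ENNReal.inv_two_add_inv_two]
  · rw [union_empty, h1, add_zero]
  · rw [empty_union, h2, zero_add]
  · rw [union_empty, measure_empty, add_zero]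

lemma rad_map_neg {Ω : Type*} [MeasurableSpace Ω] (μ : Measure Ω) [IsProbabilityMeasure μ]
    {f : Ω → ℝ} (hf : Measurable f)
    (h1 : μ {ω | f ω = 1} = 1/2) (h2 : μ {ω | f ω = -1} = 1/2) :
    μ.map (fun ω => -(f ω)) = μ.map f := by
  ext s hs
  rw [Measure.map_apply (f := fun ω => -(f ω)) hf.neg hs, Measure.map_apply hf hs]
  have : (fun ω => -(f ω)) ⁻¹' s = f ⁻¹' (Neg.neg ⁻¹' s) := rfl
  rw [this, rad_split μ hf h1 h2, rad_split μ hf h1 h2]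
  simp only [Set.mem_preimage, neg_neg]
  exact add_comm _ _

lemma joint_law {Ω : Type*} [MeasurableSpace Ω] (μ : Measure Ω) [IsProbabilityMeasure μ]
    {N : ℕ} (ε : Fin N → Ω → ℝ) (hmeas : ∀ n, Measurable (ε n))
    (hindep : iIndepFun ε μ) :
    μ.map (fun ω n => ε n ω) = Measure.pi (fun n => μ.map (ε n)) := by
  haveI : ∀ n, IsProbabilityMeasure (μ.map (ε n)) :=
    fun n => Measure.isProbabilityMeasure_map (hmeas n).aemeasurable
  refine (Measure.pi_eq fun s hs => ?_).symm
  rw [Measure.map_apply (measurable_pi_lambda _ hmeas) (MeasurableSet.univ_pi hs)]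
  have hpre : (fun ω n => ε n ω) ⁻¹' (Set.pi univ s) = ⋂ n, ε n ⁻¹' s n := by
    ext ω; simp [Set.mem_univ_pi]
  rw [hpre]
  have := hindep.measure_inter_preimage_eq_mul (S := Finset.univ) (sets := s)
    (fun i _ => hs i)
  simp only [Finset.mem_univ, Set.iInter_true] at this
  simp only [Measure.map_apply (hmeas _) (hs _)]
  exact this

/-- Kahane contraction principle for Rademacher sums:
`E‖∑ aₙ εₙ xₙ‖^p ≤ (max |aₙ|)^p · E‖∑ εₙ xₙ‖^p`. -/
theorem stmt_4 {Ω : Type*} [MeasurableSpace Ω] (μ : Measure Ω) [IsProbabilityMeasure μ]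
    {X : Type*} [NormedAddCommGroup X] [NormedSpace ℝ X]
    {N : ℕ} (ε : Fin N → Ω → ℝ) (hmeas : ∀ n, Measurable (ε n))
    (hindep : iIndepFun ε μ)
    (hdist : ∀ n, μ {ω | ε n ω = 1} = 1/2 ∧ μ {ω | ε n ω = -1} = 1/2)
    (x : Fin N → X) (a : Fin N → ℝ) (p : ℝ) (hp : 1 ≤ p)
    (M : ℝ) (hM : 0 ≤ M) (hMa : ∀ n, |a n| ≤ M) :
    ∫ ω, ‖∑ n, (a n * ε n ω) • x n‖ ^ p ∂μ ≤
      M ^ p * ∫ ω, ‖∑ n, ε n ω • x n‖ ^ p ∂μ := by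
  classical
  have hp0 : 0 ≤ p := le_trans zero_le_one hp
  -- a.e. bound on ε
  have hae : ∀ᵐ ω ∂μ, ∀ n, |ε n ω| ≤ 1 := by
    rw [ae_all_iff]
    intro n
    have hA : MeasurableSet {ω | ε n ω = 1} := (hmeas n) (measurableSet_singleton 1)
    have hB : MeasurableSet {ω | ε n ω = -1} := (hmeas n) (measurableSet_singleton (-1))
    have hdisj : Disjoint {ω | ε n ω = 1} {ω | ε n ω = -1} := by
      rw [Set.disjoint_left]
      intro ω h1 h2
      simp only [Set.mem_setOf_eq] at h1 h2
      rw [h1] at h2; norm_num at h2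
    have hU : μ ({ω | ε n ω = 1} ∪ {ω | ε n ω = -1}) = 1 := by
      rw [measure_union hdisj hB, (hdist n).1, (hdist n).2, one_div,
        ENNReal.inv_two_add_inv_two]
    have hcompl : μ ({ω | ε n ω = 1} ∪ {ω | ε n ω = -1})ᶜ = 0 := by
      rw [measure_compl (hA.union hB) (measure_ne_top _ _), hU, measure_univ, tsub_self]
    rw [ae_iff]
    refine measure_mono_null (fun ω hω => ?_) hcompl
    simp only [Set.mem_setOf_eq, not_le] at hω
    simp only [Set.mem_compl_iff, Set.mem_union, Set.mem_setOf_eq]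
    rintro (h | h) <;> rw [h] at hω <;> norm_num at hω
  set Φ : Ω → (Fin N → ℝ) := fun ω n => ε n ω with hΦdef
  have hΦ : Measurable Φ := measurable_pi_lambda _ hmeas
  have hL := joint_law μ ε hmeas hindep
  have hSM : ∀ b : Fin N → ℝ, Measurable fun y : Fin N → ℝ => ‖∑ n, (b n * y n) • x n‖ ^ p := by
    intro b
    have h1 : StronglyMeasurable fun y : Fin N → ℝ => ∑ n, (b n * y n) • x n := by
      exact Finset.stronglyMeasurable_fun_sum
        (f := fun (n : Fin N) (y : Fin N → ℝ) => (b n * y n) • x n) Finset.univ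
        (fun n _ => ((by fun_prop : Measurable fun y : Fin N → ℝ => b n * y n).stronglyMeasurable).smul_const (x n))
    exact (Real.continuous_rpow_const hp0).measurable.comp h1.norm.measurable
  have hIntegrand : ∀ b : Fin N → ℝ,
      Integrable (fun ω => ‖∑ n, (b n * ε n ω) • x n‖ ^ p) μ := by
    intro b
    refine (integrable_const ((∑ n, |b n| * ‖x n‖) ^ p)).mono'
      (((hSM b).comp hΦ).aestronglyMeasurable) ?_
    filter_upwards [hae] with ω hω
    rw [Real.norm_eq_abs, abs_of_nonneg (Real.rpow_nonneg (norm_nonneg _) p)]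
    refine Real.rpow_le_rpow (norm_nonneg _) ?_ hp0
    refine (norm_sum_le _ _).trans (Finset.sum_le_sum fun n _ => ?_)
    rw [norm_smul, Real.norm_eq_abs, abs_mul]
    have hb : |b n| * |ε n ω| ≤ |b n| * 1 := mul_le_mul_of_nonneg_left (hω n) (abs_nonneg _)
    calc |b n| * |ε n ω| * ‖x n‖ ≤ |b n| * 1 * ‖x n‖ :=
          mul_le_mul_of_nonneg_right hb (norm_nonneg _)
      _ = |b n| * ‖x n‖ := by ring
  set F : (Fin N → ℝ) → ℝ := fun b => ∫ ω, ‖∑ n, (b n * ε n ω) • x n‖ ^ p ∂μ with hF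
  have hFpi : ∀ b, F b =
      ∫ y, ‖∑ n, (b n * y n) • x n‖ ^ p ∂(Measure.pi fun n => μ.map (ε n)) := by
    intro b
    rw [← hL, integral_map hΦ.aemeasurable (hSM b).aestronglyMeasurable]
  have hflip : ∀ (b : Fin N → ℝ) (i : Fin N), F (Function.update b i (-(b i))) = F b := by
    intro b i
    set g : Fin N → ℝ → ℝ := fun n t => if n = i then -t else t with hg
    have hgm : ∀ n, Measurable (g n) := by
      intro n
      by_cases h : n = i <;> simp only [hg, h, if_true, if_false]
      · exact measurable_neg
      · exact measurable_id
    have hindep' : iIndepFun (fun n => g n ∘ ε n) μ :=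
      hindep.comp g hgm
    have hmeas' : ∀ n, Measurable (g n ∘ ε n) := fun n => (hgm n).comp (hmeas n)
    have hL' := joint_law μ _ hmeas' hindep'
    have hν' : ∀ n, μ.map (g n ∘ ε n) = μ.map (ε n) := by
      intro n
      by_cases h : n = i
      · subst h
        have he : g n ∘ ε n = fun ω => -(ε n ω) := by funext ω; simp [hg]
        rw [he]
        exact rad_map_neg μ (hmeas n) (hdist n).1 (hdist n).2
      · have he : g n ∘ ε n = ε n := by funext ω; simp [hg, h]
        rw [he]
    have key : (fun ω => ‖∑ n, ((Function.update b i (-(b i))) n * ε n ω) • x n‖ ^ p)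
        = fun ω => ‖∑ n, (b n * (g n ∘ ε n) ω) • x n‖ ^ p := by
      funext ω
      congr 2
      refine Finset.sum_congr rfl fun n _ => ?_
      by_cases h : n = i
      · subst h
        simp only [Function.update_self, hg, Function.comp_apply, if_true]
        ring_nf
      · simp [Function.update_of_ne h, hg, h]
    calc F (Function.update b i (-(b i)))
        = ∫ ω, ‖∑ n, (b n * (g n ∘ ε n) ω) • x n‖ ^ p ∂μ := by
          rw [hF]; exact congrArg (fun f => ∫ ω, f ω ∂μ) key
      _ = ∫ y, ‖∑ n, (b n * y n) • x n‖ ^ p ∂(μ.map (fun ω n => (g n ∘ ε n) ω)) :=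
          (integral_map (measurable_pi_lambda _ hmeas').aemeasurable
            (hSM b).aestronglyMeasurable).symm
      _ = ∫ y, ‖∑ n, (b n * y n) • x n‖ ^ p ∂(Measure.pi fun n => μ.map (ε n)) := by
          rw [hL']
          congr 1
          exact congrArg Measure.pi (funext hν')
      _ = F b := (hFpi b).symm
  have hstep : ∀ (b : Fin N → ℝ) (i : Fin N) (t : ℝ), M ≠ 0 → |t| ≤ M →
      F (Function.update b i t) ≤ F (Function.update b i M) := by
    intro b i t hM0 ht
    have hMpos : 0 < M := lt_of_le_of_ne hM (Ne.symm hM0)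
    obtain ⟨ht1, ht2⟩ := abs_le.mp ht
    set lam : ℝ := (M + t) / (2 * M) with hlam
    have h2M : (0:ℝ) < 2 * M := by linarith
    have hlam0 : 0 ≤ lam := div_nonneg (by linarith) h2M.le
    have hlam1 : lam ≤ 1 := by rw [hlam, div_le_one h2M]; linarith
    have hcoef : lam * M + (1 - lam) * (-M) = t := by
      field_simp [hlam]
      have h' : lam * (2 * M) = M + t := by rw [hlam]; exact div_mul_cancel₀ _ h2M.ne'
      linarith
    have hpt : ∀ ω, ‖∑ n, ((Function.update b i t) n * ε n ω) • x n‖ ^ p ≤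
        lam * ‖∑ n, ((Function.update b i M) n * ε n ω) • x n‖ ^ p
        + (1 - lam) * ‖∑ n, ((Function.update b i (-M)) n * ε n ω) • x n‖ ^ p := by
      intro ω
      set v : X := ε i ω • x i with hv
      set R : X := ∑ n ∈ Finset.univ \ {i}, (b n * ε n ω) • x n with hR
      have hsum : ∀ c : ℝ,
          ∑ n, ((Function.update b i c) n * ε n ω) • x n = c • v + R := by
        intro c
        have he : (fun n => ((Function.update b i c) n * ε n ω) • x n)
            = Function.update (fun n => (b n * ε n ω) • x n) i ((c * ε i ω) • x i) := by
          funext n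
          by_cases h : n = i
          · subst h; simp
          · simp [Function.update_of_ne h]
        rw [he, Finset.sum_update_of_mem (Finset.mem_univ i), mul_smul, ← hv, ← hR]
      rw [hsum t, hsum M, hsum (-M)]
      have hdecomp : t • v + R = lam • (M • v + R) + (1 - lam) • ((-M) • v + R) := by
        rw [← hcoef]
        module
      calc ‖t • v + R‖ ^ p
          ≤ (lam * ‖M • v + R‖ + (1 - lam) * ‖(-M) • v + R‖) ^ p := by
            refine Real.rpow_le_rpow (norm_nonneg _) ?_ hp0
            rw [hdecomp]
            refine (norm_add_le _ _).trans ?_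
            rw [norm_smul, norm_smul, Real.norm_eq_abs, Real.norm_eq_abs,
              abs_of_nonneg hlam0, abs_of_nonneg (by linarith : (0:ℝ) ≤ 1 - lam)]
        _ ≤ lam * ‖M • v + R‖ ^ p + (1 - lam) * ‖(-M) • v + R‖ ^ p := by
            have hcx := (convexOn_rpow hp).2 (Set.mem_Ici.mpr (norm_nonneg (M • v + R)))
              (Set.mem_Ici.mpr (norm_nonneg ((-M) • v + R))) hlam0
              (by linarith : (0:ℝ) ≤ 1 - lam) (by ring)
            simpa [smul_eq_mul] using hcx
    have hF2 : F (Function.update b i (-M)) = F (Function.update b i M) := by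
      have h1 : Function.update b i (-M) = Function.update (Function.update b i M) i
          (-(Function.update b i M i)) := by
        simp [Function.update_idem]
      rw [h1, hflip]
    calc F (Function.update b i t)
        ≤ ∫ ω, (lam * ‖∑ n, ((Function.update b i M) n * ε n ω) • x n‖ ^ p
            + (1 - lam) * ‖∑ n, ((Function.update b i (-M)) n * ε n ω) • x n‖ ^ p) ∂μ := by
          refine integral_mono (hIntegrand _) ?_ hpt
          exact ((hIntegrand _).const_mul lam).add ((hIntegrand _).const_mul (1 - lam))
      _ = lam * F (Function.update b i M) + (1 - lam) * F (Function.update b i (-M)) := by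
          rw [integral_add ((hIntegrand _).const_mul lam)
            ((hIntegrand _).const_mul (1 - lam)), integral_const_mul, integral_const_mul]
      _ = F (Function.update b i M) := by rw [hF2]; ring
  have hind : ∀ s : Finset (Fin N), M ≠ 0 →
      F (fun n => if n ∈ s then a n else M) ≤ F (fun _ => M) := by
    intro s hM0
    induction s using Finset.induction_on with
    | empty => simp
    | @insert i s hi ih =>
      have heq : (fun n => if n ∈ insert i s then a n else M)
          = Function.update (fun n => if n ∈ s then a n else M) i (a i) := by
        funext n
        by_cases h : n = i
        · subst h; simp
        · simp [Function.update_of_ne h, Finset.mem_insert, h]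
      rw [heq]
      refine le_trans (hstep _ i (a i) hM0 (hMa i)) ?_
      have heq2 : Function.update (fun n => if n ∈ s then a n else M) i M
          = (fun n => if n ∈ s then a n else M) := by
        funext n
        by_cases h : n = i
        · subst h; simp [hi]
        · simp [Function.update_of_ne h]
      rw [heq2]
      exact ih
  have hconst : F (fun _ => M) = M ^ p * ∫ ω, ‖∑ n, ε n ω • x n‖ ^ p ∂μ := by
    rw [hF, ← integral_const_mul]
    refine integral_congr_ae (Filter.Eventually.of_forall fun ω => ?_)
    show ‖∑ n, (M * ε n ω) • x n‖ ^ p = M ^ p * ‖∑ n, ε n ω • x n‖ ^ p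
    have hs : ∑ n, (M * ε n ω) • x n = M • ∑ n, ε n ω • x n := by
      rw [Finset.smul_sum]
      exact Finset.sum_congr rfl fun n _ => (mul_smul _ _ _)
    rw [hs, norm_smul, Real.norm_eq_abs, abs_of_nonneg hM,
      Real.mul_rpow hM (norm_nonneg _)]
  by_cases hM0 : M = 0
  · subst hM0
    have ha0 : ∀ n, a n = 0 := fun n =>
      abs_eq_zero.mp (le_antisymm (hMa n) (abs_nonneg _))
    have hz : (fun ω => ‖∑ n, (a n * ε n ω) • x n‖ ^ p) = fun _ => (0:ℝ) := by
      funext ω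
      simp [ha0, Real.zero_rpow (by linarith : p ≠ 0)]
    rw [hz, integral_zero, Real.zero_rpow (by linarith : p ≠ 0), zero_mul]
  · have hfin := hind Finset.univ hM0
    simp only [Finset.mem_univ, if_true] at hfin
    calc ∫ ω, ‖∑ n, (a n * ε n ω) • x n‖ ^ p ∂μ = F a := rfl
      _ ≤ F (fun _ => M) := hfin
      _ = M ^ p * ∫ ω, ‖∑ n, ε n ω • x n‖ ^ p ∂μ := hconst
end

section
/- Let θ ∈ (0, π/2), let h be a bounded holomorphic function on the sector Σ_θ = {z ∈ ℂ \ {0} : |Arg z| < θ} satisfying |h(z)| ≤ C |z|^s / (1 + |z|^{2s}) for some C, s > 0, and let ρ ∈ (0,1). Define h̃(z) = h((1-ρ) + ρz) − h(1-ρ)/(1+z) on Σ_θ. Then h̃ ∈ H^∞₀(Σ_θ), i.e., h̃ is bounded holomorphic on Σ_θ and there exist C', s' > 0 with |h̃(z)| ≤ C' |z|^{s'} / (1 + |z|^{2s'}) for all z ∈ Σ_θ, and moreover ‖h̃‖_{∞,Σ_θ} ≤ 2‖h‖_{∞,Σ_θ}. -/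
/-- The open sector `Σ_θ = {z ≠ 0 : |Arg z| < θ}`. -/
def Sector (θ : ℝ) : Set ℂ := {z : ℂ | z ≠ 0 ∧ |Complex.arg z| < θ}

private lemma tan_abs_eq {x : ℝ} (hx : |x| < Real.pi / 2) :
    Real.tan |x| = |Real.tan x| := by
  rcases le_or_gt 0 x with h | h
  · rw [abs_of_nonneg h] at hx ⊢
    rw [abs_of_nonneg (Real.tan_nonneg_of_nonneg_of_le_pi_div_two h hx.le)]
  · rw [abs_of_neg h] at hx ⊢
    rw [Real.tan_neg, abs_of_nonpos
      (Real.tan_nonpos_of_nonpos_of_neg_pi_div_two_le h.le (by linarith))]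

private lemma mem_sector_iff {θ : ℝ} (hθ : θ ∈ Set.Ioo 0 (Real.pi / 2)) {z : ℂ} :
    z ∈ Sector θ ↔ 0 < z.re ∧ |z.im| < Real.tan θ * z.re := by
  constructor
  · rintro ⟨hz0, harg⟩
    have hlt : |Complex.arg z| < Real.pi / 2 := harg.trans hθ.2
    have hre : 0 < z.re := by
      rcases Complex.abs_arg_lt_pi_div_two_iff.mp hlt with h | h
      · exact h
      · exact absurd h hz0
    refine ⟨hre, ?_⟩
    have h1 : Real.tan |Complex.arg z| < Real.tan θ :=
      Real.tan_lt_tan_of_nonneg_of_lt_pi_div_two (abs_nonneg _) hθ.2 harg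
    rw [tan_abs_eq hlt, Complex.tan_arg, abs_div, abs_of_pos hre] at h1
    exact (div_lt_iff₀ hre).mp h1
  · rintro ⟨hre, him⟩
    have hz0 : z ≠ 0 := fun h => by simp [h] at hre
    refine ⟨hz0, ?_⟩
    have h2 : |Complex.arg z| < Real.pi / 2 :=
      Complex.abs_arg_lt_pi_div_two_iff.mpr (Or.inl hre)
    by_contra hcon
    push_neg at hcon
    have hmem1 : θ ∈ Set.Ioo (-(Real.pi / 2)) (Real.pi / 2) :=
      ⟨by nlinarith [Real.pi_pos, hθ.1], hθ.2⟩
    have hmem2 : |Complex.arg z| ∈ Set.Ioo (-(Real.pi / 2)) (Real.pi / 2) :=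
      ⟨by nlinarith [Real.pi_pos, abs_nonneg (Complex.arg z)], h2⟩
    have h3 : Real.tan θ ≤ Real.tan |Complex.arg z| :=
      Real.strictMonoOn_tan.monotoneOn hmem1 hmem2 hcon
    rw [tan_abs_eq h2, Complex.tan_arg, abs_div, abs_of_pos hre] at h3
    have : |z.im| / z.re < Real.tan θ := (div_lt_iff₀ hre).mpr him
    linarith

set_option maxHeartbeats 1000000 in
/-- if `h ∈ H^∞₀(Σ_θ)` and `ρ ∈ (0,1)`, then
`h̃(z) = h((1-ρ)+ρz) − h(1-ρ)/(1+z)` belongs to `H^∞₀(Σ_θ)`, with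
`‖h̃‖_{∞,Σ_θ} ≤ 2 ‖h‖_{∞,Σ_θ}`. -/
theorem stmt_6 (θ : ℝ) (hθ : θ ∈ Set.Ioo 0 (Real.pi / 2))
    (h : ℂ → ℂ) (hhol : DifferentiableOn ℂ h (Sector θ))
    (C s : ℝ) (hC : 0 < C) (hs : 0 < s)
    (hdecay : ∀ z ∈ Sector θ, ‖h z‖ ≤ C * ‖z‖ ^ s / (1 + ‖z‖ ^ (2 * s)))
    (ρ : ℝ) (hρ : ρ ∈ Set.Ioo (0 : ℝ) 1)
    (htil : ℂ → ℂ)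
    (hdef : ∀ z : ℂ, htil z = h (((1 - ρ : ℝ) : ℂ) + (ρ : ℂ) * z)
      - h ((1 - ρ : ℝ) : ℂ) / (1 + z)) :
    (DifferentiableOn ℂ htil (Sector θ) ∧
      ∃ C' s' : ℝ, 0 < C' ∧ 0 < s' ∧
        ∀ z ∈ Sector θ, ‖htil z‖ ≤ C' * ‖z‖ ^ s' / (1 + ‖z‖ ^ (2 * s'))) ∧
    ∀ M : ℝ, (∀ z ∈ Sector θ, ‖h z‖ ≤ M) → ∀ z ∈ Sector θ, ‖htil z‖ ≤ 2 * M := by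
  obtain ⟨hρ0, hρ1⟩ := hρ
  set T := Real.tan θ with hTdef
  have hT : 0 < T := Real.tan_pos_of_pos_of_lt_pi_div_two hθ.1 hθ.2
  set t : ℝ := 1 - ρ with htdef
  have ht : 0 < t := by simp only [htdef]; linarith
  set tC : ℂ := ((1 - ρ : ℝ) : ℂ) with htCdef
  have htCre : tC.re = t := by simp [htCdef, htdef]
  have htCim : tC.im = 0 := by simp [htCdef]
  -- membership facts
  have htCmem : tC ∈ Sector θ := by
    rw [mem_sector_iff hθ, htCre, htCim]
    exact ⟨ht, by simpa using mul_pos hT ht⟩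
  have hwre : ∀ z : ℂ, (tC + (ρ : ℂ) * z).re = t + ρ * z.re := by
    intro z; simp [htCdef, htdef]
  have hwim : ∀ z : ℂ, (tC + (ρ : ℂ) * z).im = ρ * z.im := by
    intro z; simp [htCdef]
  have hmaps : ∀ z ∈ Sector θ, tC + (ρ : ℂ) * z ∈ Sector θ := by
    intro z hz
    rw [mem_sector_iff hθ] at hz ⊢
    obtain ⟨hre, him⟩ := hz
    rw [hwre, hwim]
    constructor
    · positivity
    · rw [abs_mul, abs_of_pos hρ0]
      calc ρ * |z.im| < ρ * (T * z.re) := mul_lt_mul_of_pos_left him hρ0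
        _ ≤ T * (t + ρ * z.re) := by nlinarith
  -- `1 + z ≠ 0` and `1 ≤ ‖1 + z‖` on the sector
  have hre_pos : ∀ z ∈ Sector θ, 0 < z.re := fun z hz => ((mem_sector_iff hθ).mp hz).1
  have hone : ∀ z ∈ Sector θ, 1 ≤ ‖1 + z‖ := by
    intro z hz
    have h1 : (1 + z).re = 1 + z.re := by simp
    have := hre_pos z hz
    calc (1 : ℝ) ≤ |(1 + z).re| := by rw [h1, abs_of_pos (by linarith)]; linarith
      _ ≤ ‖1 + z‖ := by exact Complex.abs_re_le_norm _
  have hne : ∀ z ∈ Sector θ, (1 : ℂ) + z ≠ 0 := by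
    intro z hz h0
    have := hone z hz
    rw [h0] at this
    norm_num at this
  -- global bound `‖h v‖ ≤ C`
  have hrpow2 : ∀ x : ℝ, 0 ≤ x → x ^ (2 * s) = (x ^ s) ^ 2 := by
    intro x hx
    rw [mul_comm, Real.rpow_mul hx, Real.rpow_two]
  have hCb : ∀ v ∈ Sector θ, ‖h v‖ ≤ C := by
    intro v hv
    refine (hdecay v hv).trans ?_
    have hx : (0:ℝ) ≤ ‖v‖ := norm_nonneg _
    have h2 : ‖v‖ ^ (2 * s) = (‖v‖ ^ s) ^ 2 := hrpow2 _ hx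
    have h3 : 0 ≤ ‖v‖ ^ s := Real.rpow_nonneg hx s
    rw [div_le_iff₀ (by nlinarith)]
    nlinarith [sq_nonneg (‖v‖ ^ s - 1)]
  -- Part 3: the `2 M` bound
  have part3 : ∀ M : ℝ, (∀ z ∈ Sector θ, ‖h z‖ ≤ M) →
      ∀ z ∈ Sector θ, ‖htil z‖ ≤ 2 * M := by
    intro M hM z hz
    rw [hdef]
    have h1 : ‖h (tC + (ρ : ℂ) * z)‖ ≤ M := hM _ (hmaps z hz)
    have h2 : ‖h tC / (1 + z)‖ ≤ M := by
      rw [norm_div]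
      calc ‖h tC‖ / ‖1 + z‖ ≤ ‖h tC‖ / 1 :=
            div_le_div_of_nonneg_left (norm_nonneg _) one_pos (hone z hz)
        _ = ‖h tC‖ := div_one _
        _ ≤ M := hM _ htCmem
    calc ‖h (tC + (ρ : ℂ) * z) - h tC / (1 + z)‖
        ≤ ‖h (tC + (ρ : ℂ) * z)‖ + ‖h tC / (1 + z)‖ := norm_sub_le _ _
      _ ≤ M + M := add_le_add h1 h2
      _ = 2 * M := by ring
  -- Part 1: differentiability
  have hdiff : DifferentiableOn ℂ htil (Sector θ) := by
    have heq : htil = fun z => h (tC + (ρ : ℂ) * z) - h tC / (1 + z) := by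
      funext z; exact hdef z
    rw [heq]
    apply DifferentiableOn.sub
    · exact DifferentiableOn.comp hhol
        ((differentiable_const _).add (differentiable_id.const_mul _)).differentiableOn
        (fun z hz => hmaps z hz)
    · exact DifferentiableOn.div (differentiableOn_const _)
        ((differentiable_const _).add differentiable_id).differentiableOn
        (fun z hz => hne z hz)
  -- Part 2: decay
  refine ⟨⟨hdiff, ?_⟩, part3⟩
  set δ : ℝ := t * T / (2 * (1 + T)) with hδdef
  have hδ : 0 < δ := by positivity
  have hδt : δ ≤ t / 2 := by
    rw [hδdef, div_le_div_iff₀ (by positivity) (by norm_num)]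
    nlinarith
  -- the ball around `tC` of radius `δ` is inside the sector
  have hball : Metric.ball tC δ ⊆ Sector θ := by
    intro v hv
    rw [Metric.mem_ball, dist_eq_norm] at hv
    have hre : |(v - tC).re| ≤ ‖v - tC‖ := by
      exact Complex.abs_re_le_norm _
    have him : |(v - tC).im| ≤ ‖v - tC‖ := by
      exact Complex.abs_im_le_norm _
    have hre' : |v.re - t| < δ := by
      simpa [Complex.sub_re, htCre] using hre.trans_lt hv
    have him' : |v.im| < δ := by
      simpa [Complex.sub_im, htCim] using him.trans_lt hv
    rw [mem_sector_iff hθ]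
    have h1 : t - δ < v.re := by linarith [(abs_lt.mp hre').1]
    constructor
    · linarith
    · calc |v.im| < δ := him'
        _ < T * (t / 2) := by
            rw [hδdef, div_lt_iff₀ (by positivity)]
            nlinarith [mul_pos (mul_pos ht hT) hT]
        _ ≤ T * v.re := by nlinarith
  -- Schwarz-type Lipschitz bound near `tC`
  have hschwarz : ∀ z : ℂ, ρ * ‖z‖ < δ →
      ‖h (tC + (ρ : ℂ) * z) - h tC‖ ≤ (2 * C + 1) / δ * (ρ * ‖z‖) := by
    intro z hzs
    have hd : DifferentiableOn ℂ h (Metric.ball tC δ) := hhol.mono hball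
    have hm : Set.MapsTo h (Metric.ball tC δ) (Metric.ball (h tC) (2 * C + 1)) := by
      intro v hv
      rw [Metric.mem_ball, dist_eq_norm]
      calc ‖h v - h tC‖ ≤ ‖h v‖ + ‖h tC‖ := norm_sub_le _ _
        _ ≤ C + C := add_le_add (hCb v (hball hv)) (hCb tC htCmem)
        _ < 2 * C + 1 := by linarith
    have hmem : tC + (ρ : ℂ) * z ∈ Metric.ball tC δ := by
      rw [Metric.mem_ball, dist_eq_norm]
      have heq : tC + (ρ : ℂ) * z - tC = (ρ : ℂ) * z := by ring
      rw [heq, norm_mul, Complex.norm_real, Real.norm_eq_abs, abs_of_pos hρ0]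
      exact hzs
    have hsw := Complex.dist_le_div_mul_dist_of_mapsTo_ball hd (hm.mono_right Metric.ball_subset_closedBall) hmem
    rw [dist_eq_norm, dist_eq_norm] at hsw
    have heq : tC + (ρ : ℂ) * z - tC = (ρ : ℂ) * z := by ring
    rw [heq, norm_mul, Complex.norm_real, Real.norm_eq_abs, abs_of_pos hρ0] at hsw
    exact hsw
  -- lower bound on real part in the sector
  set c0 : ℝ := (1 + T)⁻¹ with hc0def
  have hc0 : 0 < c0 := by positivity
  have hrebd : ∀ z ∈ Sector θ, c0 * ‖z‖ ≤ z.re := by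
    intro z hz
    obtain ⟨hre, him⟩ := (mem_sector_iff hθ).mp hz
    have h1 : ‖z‖ ≤ |z.re| + |z.im| := by
      exact Complex.norm_le_abs_re_add_abs_im _
    rw [abs_of_pos hre] at h1
    rw [hc0def, inv_mul_le_iff₀ (by positivity)]
    nlinarith
  -- constants
  set A : ℝ := (2 * C + 1) / δ * ρ + C + 2 * C * ρ / δ with hAdef
  have hA : 0 < A := by positivity
  have hρc0s : (0:ℝ) < (ρ * c0) ^ s := Real.rpow_pos_of_pos (by positivity) s
  set B : ℝ := C / (ρ * c0) ^ s + C with hBdef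
  have hB : 0 < B := by positivity
  set s' : ℝ := min s 1 with hs'def
  have hs' : 0 < s' := lt_min hs one_pos
  have hs's : s' ≤ s := min_le_left _ _
  have hs'1 : s' ≤ 1 := min_le_right _ _
  refine ⟨2 * max A B, s', by positivity, hs', ?_⟩
  intro z hz
  have hz0 : z ≠ 0 := hz.1
  have hzn : 0 < ‖z‖ := norm_pos_iff.mpr hz0
  have hs'n : 0 < ‖z‖ ^ s' := Real.rpow_pos_of_pos hzn s'
  have h2s'n : 0 < ‖z‖ ^ (2 * s') := Real.rpow_pos_of_pos hzn _
  rcases le_or_gt ‖z‖ 1 with hle | hlt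
  · -- small `z`: linear bound
    have hlin : ‖htil z‖ ≤ A * ‖z‖ := by
      rcases lt_or_ge (ρ * ‖z‖) δ with hc | hc
      · rw [hdef]
        have halg : h (tC + (ρ : ℂ) * z) - h tC / (1 + z)
            = (h (tC + (ρ : ℂ) * z) - h tC) + h tC * z / (1 + z) := by
          field_simp [hne z hz]
          ring
        rw [halg]
        have h1 := hschwarz z hc
        have h2 : ‖h tC * z / (1 + z)‖ ≤ C * ‖z‖ := by
          rw [norm_div, norm_mul]
          calc ‖h tC‖ * ‖z‖ / ‖1 + z‖ ≤ ‖h tC‖ * ‖z‖ / 1 :=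
                div_le_div_of_nonneg_left (by positivity) one_pos (hone z hz)
            _ = ‖h tC‖ * ‖z‖ := div_one _
            _ ≤ C * ‖z‖ := mul_le_mul_of_nonneg_right (hCb tC htCmem) (norm_nonneg _)
        calc ‖(h (tC + (ρ : ℂ) * z) - h tC) + h tC * z / (1 + z)‖
            ≤ ‖h (tC + (ρ : ℂ) * z) - h tC‖ + ‖h tC * z / (1 + z)‖ := norm_add_le _ _
          _ ≤ (2 * C + 1) / δ * (ρ * ‖z‖) + C * ‖z‖ := add_le_add h1 h2
          _ ≤ A * ‖z‖ := by
              rw [hAdef]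
              have h4 : 0 ≤ 2 * C * ρ / δ * ‖z‖ := by positivity
              nlinarith [norm_nonneg z]
      · have h1 : ‖htil z‖ ≤ 2 * C := part3 C hCb z hz
        have h2 : 1 ≤ ρ * ‖z‖ / δ := (one_le_div hδ).mpr hc
        calc ‖htil z‖ ≤ 2 * C := h1
          _ ≤ 2 * C * (ρ * ‖z‖ / δ) := le_mul_of_one_le_right (by positivity) h2
          _ = 2 * C * ρ / δ * ‖z‖ := by ring
          _ ≤ A * ‖z‖ := by
              rw [hAdef]
              have h4 : 0 ≤ ((2 * C + 1) / δ * ρ + C) * ‖z‖ := by positivity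
              nlinarith
    have hr1 : ‖z‖ ≤ ‖z‖ ^ s' := by
      calc ‖z‖ = ‖z‖ ^ (1:ℝ) := (Real.rpow_one _).symm
        _ ≤ ‖z‖ ^ s' := Real.rpow_le_rpow_of_exponent_ge hzn hle hs'1
    have hr2 : 1 + ‖z‖ ^ (2 * s') ≤ 2 := by
      have : ‖z‖ ^ (2 * s') ≤ 1 := Real.rpow_le_one (norm_nonneg _) hle (by positivity)
      linarith
    calc ‖htil z‖ ≤ A * ‖z‖ := hlin
      _ ≤ A * ‖z‖ ^ s' := mul_le_mul_of_nonneg_left hr1 hA.le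
      _ = 2 * A * ‖z‖ ^ s' / 2 := by ring
      _ ≤ 2 * max A B * ‖z‖ ^ s' / (1 + ‖z‖ ^ (2 * s')) := by
          apply div_le_div₀ (by positivity) ?_ (by positivity) hr2
          have hAm : A ≤ max A B := le_max_left _ _
          nlinarith [hs'n.le]
  · -- large `z`: inverse-power bound
    have hinv : ‖htil z‖ ≤ B / ‖z‖ ^ s' := by
      rw [hdef]
      have hwmem : tC + (ρ : ℂ) * z ∈ Sector θ := hmaps z hz
      set w := tC + (ρ : ℂ) * z with hwdef
      have hwn : ρ * c0 * ‖z‖ ≤ ‖w‖ := by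
        have h1 : c0 * ‖z‖ ≤ z.re := hrebd z hz
        have h2 : w.re = t + ρ * z.re := hwre z
        have h3 : |w.re| ≤ ‖w‖ := by
          exact Complex.abs_re_le_norm _
        have h4 : 0 < z.re := hre_pos z hz
        rw [h2, abs_of_pos (by positivity)] at h3
        nlinarith
      have hwpos : 0 < ‖w‖ := lt_of_lt_of_le (by positivity) hwn
      have hhw : ‖h w‖ ≤ C / ‖w‖ ^ s := by
        refine (hdecay w hwmem).trans ?_
        have hp : 0 < ‖w‖ ^ s := Real.rpow_pos_of_pos hwpos s
        rw [div_le_div_iff₀ (by positivity) hp]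
        have h2 : ‖w‖ ^ (2 * s) = (‖w‖ ^ s) ^ 2 := hrpow2 _ (norm_nonneg _)
        nlinarith
      have hhw2 : ‖h w‖ ≤ C / (ρ * c0) ^ s / ‖z‖ ^ s' := by
        refine hhw.trans ?_
        have hm2 : (ρ * c0 * ‖z‖) ^ s = (ρ * c0) ^ s * ‖z‖ ^ s :=
          Real.mul_rpow (by positivity) (norm_nonneg _)
        have hm1 : (ρ * c0) ^ s * ‖z‖ ^ s ≤ ‖w‖ ^ s := by
          rw [← hm2]; exact Real.rpow_le_rpow (by positivity) hwn hs.le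
        have hm3 : ‖z‖ ^ s' ≤ ‖z‖ ^ s :=
          Real.rpow_le_rpow_of_exponent_le hlt.le hs's
        calc C / ‖w‖ ^ s ≤ C / ((ρ * c0) ^ s * ‖z‖ ^ s) :=
              div_le_div_of_nonneg_left hC.le (by positivity) hm1
          _ ≤ C / ((ρ * c0) ^ s * ‖z‖ ^ s') :=
              div_le_div_of_nonneg_left hC.le (by positivity)
                (mul_le_mul_of_nonneg_left hm3 hρc0s.le)
          _ = C / (ρ * c0) ^ s / ‖z‖ ^ s' := by rw [div_div]
      have hzle : ‖z‖ ≤ ‖1 + z‖ := by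
        have h4 : 0 < z.re := hre_pos z hz
        have h5 : ‖z‖ ^ 2 ≤ ‖1 + z‖ ^ 2 := by
          rw [Complex.sq_norm, Complex.sq_norm,
            Complex.normSq_apply, Complex.normSq_apply]
          simp only [Complex.add_re, Complex.add_im, Complex.one_re, Complex.one_im]
          nlinarith
        have h6 := Real.sqrt_le_sqrt h5
        rwa [Real.sqrt_sq (norm_nonneg _), Real.sqrt_sq (norm_nonneg _)] at h6
      have hterm2 : ‖h tC / (1 + z)‖ ≤ C / ‖z‖ ^ s' := by
        rw [norm_div]
        have hzs : ‖z‖ ^ s' ≤ ‖z‖ := by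
          calc ‖z‖ ^ s' ≤ ‖z‖ ^ (1:ℝ) :=
                Real.rpow_le_rpow_of_exponent_le hlt.le hs'1
            _ = ‖z‖ := Real.rpow_one _
        have h7 : (0:ℝ) < ‖1 + z‖ := lt_of_lt_of_le one_pos (hone z hz)
        calc ‖h tC‖ / ‖1 + z‖ ≤ C / ‖1 + z‖ :=
              div_le_div_of_nonneg_right (hCb tC htCmem) h7.le
          _ ≤ C / ‖z‖ := div_le_div_of_nonneg_left hC.le hzn hzle
          _ ≤ C / ‖z‖ ^ s' := div_le_div_of_nonneg_left hC.le hs'n hzs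
      calc ‖h w - h tC / (1 + z)‖ ≤ ‖h w‖ + ‖h tC / (1 + z)‖ := norm_sub_le _ _
        _ ≤ C / (ρ * c0) ^ s / ‖z‖ ^ s' + C / ‖z‖ ^ s' := add_le_add hhw2 hterm2
        _ = B / ‖z‖ ^ s' := by rw [hBdef, ← add_div]
    have hge1 : 1 ≤ ‖z‖ ^ (2 * s') := Real.one_le_rpow hlt.le (by positivity)
    have h2s' : ‖z‖ ^ (2 * s') = ‖z‖ ^ s' * ‖z‖ ^ s' := by
      rw [← Real.rpow_add hzn]; ring_nf
    refine hinv.trans ?_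
    rw [div_le_div_iff₀ hs'n (by positivity)]
    have hBmax : B ≤ max A B := le_max_right _ _
    nlinarith [hs'n, h2s'n]
end
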